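/- Let G be a connected simple graph on vertex set {1,...,n} with Laplacian L, whose first m vertices are designated as leaders. Suppose (d^1, d^2, ..., d^N) is a sequence of distance vectors (each d^p equals the distance vector of some vertex of G) together with indices k_1,...,k_N ∈ {1,...,m} such that for every p and every q > p, the k_p-th entry of d^q is strictly greater than the k_p-th entry of d^p. Then the N vectors (−L)^{r_p} e_{k_p}, p = 1,...,N, where r_p is the k_p-th entry of d^p and e_{k_p} is the k_p-th standard basis vector of ℝ^n, are linearly independent in ℝ^n. -/

import Mathlib

open Matrix SimpleGraph

lemma negLap_apply {V : Type*} [Fintype V] [DecidableEq V] (G : SimpleGraph V)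
    [DecidableRel G.Adj] (v w : V) :
    (-(G.lapMatrix ℝ)) v w
      = (if G.Adj v w then (1 : ℝ) else 0) - (if v = w then (G.degree v : ℝ) else 0) := by
  simp [lapMatrix, degMatrix, Matrix.sub_apply, Matrix.diagonal_apply]

lemma negLap_pow_key {V : Type*} [Fintype V] [DecidableEq V] (G : SimpleGraph V)
    [DecidableRel G.Adj] (hconn : G.Connected) :
    ∀ r (v k : V),
      (r < G.dist v k → ((-(G.lapMatrix ℝ)) ^ r) v k = 0) ∧
      (G.dist v k = r → 0 < ((-(G.lapMatrix ℝ)) ^ r) v k) := by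
  intro r
  induction r with
  | zero =>
    intro v k
    constructor
    · intro h
      have hne : v ≠ k := by
        intro he; subst he; rw [SimpleGraph.dist_self] at h; omega
      simp [Matrix.one_apply, hne]
    · intro h
      have : v = k := by
        rcases (SimpleGraph.dist_eq_zero_iff_eq_or_not_reachable).1 h with h1 | h1
        · exact h1
        · exact absurd (hconn v k) h1
      subst this
      simp [Matrix.one_apply]
  | succ r ih =>
    intro v k
    have hpow : ∀ w k : V, ((-(G.lapMatrix ℝ)) ^ (r + 1)) w k
        = ∑ u : V, (-(G.lapMatrix ℝ)) w u * ((-(G.lapMatrix ℝ)) ^ r) u k := by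
      intro w k
      rw [pow_succ', Matrix.mul_apply]
    -- triangle: if G.Adj v w then dist v k ≤ 1 + dist w k
    have htri : ∀ w : V, G.Adj v w → G.dist v k ≤ 1 + G.dist w k := by
      intro w hadj
      have h1 : G.dist v w = 1 := SimpleGraph.dist_eq_one_iff_adj.2 hadj
      calc G.dist v k ≤ G.dist v w + G.dist w k := hconn.dist_triangle
        _ = 1 + G.dist w k := by rw [h1]
    constructor
    · intro h
      rw [hpow]
      apply Finset.sum_eq_zero
      intro u _
      by_cases hu : v = u
      · subst hu
        have : ((-(G.lapMatrix ℝ)) ^ r) v k = 0 := (ih v k).1 (by omega)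
        rw [this, mul_zero]
      by_cases hadj : G.Adj v u
      · have hdu : r < G.dist u k := by
          have := htri u hadj; omega
        have : ((-(G.lapMatrix ℝ)) ^ r) u k = 0 := (ih u k).1 hdu
        rw [this, mul_zero]
      · have : (-(G.lapMatrix ℝ)) v u = 0 := by
          rw [negLap_apply]; simp [hadj, hu]
        rw [this, zero_mul]
    · intro h
      rw [hpow]
      -- find a neighbor on a shortest path
      have hne : G.dist v k ≠ 0 := by omega
      obtain ⟨p, hp⟩ := SimpleGraph.exists_walk_of_dist_ne_zero hne
      cases p with
      | nil => simp at hne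
      | @cons _ w _ hadj q =>
        have hq : q.length = r := by
          simp [SimpleGraph.Walk.length_cons] at hp; omega
        have hwk : G.dist w k = r := by
          have hle : G.dist w k ≤ r := hq ▸ SimpleGraph.dist_le q
          have := htri w hadj
          omega
        -- all terms nonneg
        apply Finset.sum_pos'
        · intro u _
          by_cases hu : v = u
          · subst hu
            have : ((-(G.lapMatrix ℝ)) ^ r) v k = 0 := (ih v k).1 (by omega)
            rw [this, mul_zero]
          by_cases hadju : G.Adj v u
          · have hM : (-(G.lapMatrix ℝ)) v u = 1 := by
              rw [negLap_apply]; simp [hadju, hu]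
            rw [hM, one_mul]
            have hge : r ≤ G.dist u k := by have := htri u hadju; omega
            rcases eq_or_lt_of_le hge with heq | hlt
            · exact le_of_lt ((ih u k).2 heq.symm)
            · rw [(ih u k).1 hlt]
          · have : (-(G.lapMatrix ℝ)) v u = 0 := by
              rw [negLap_apply]; simp [hadju, hu]
            rw [this, zero_mul]
        · refine ⟨w, Finset.mem_univ w, ?_⟩
          have hvw : v ≠ w := G.ne_of_adj hadj
          have hM : (-(G.lapMatrix ℝ)) v w = 1 := by
            rw [negLap_apply]; simp [hadj, hvw]
          rw [hM, one_mul]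
          exact (ih w k).2 hwk

/-- Given a connected simple graph on `{1,...,n}` whose first `m` vertices are leaders,
a sequence of distance vectors `d^1,...,d^N` with witness indices `k_1,...,k_N`
satisfying the rule (`(d^q)_{k_p} > (d^p)_{k_p}` for all `q > p`) yields linearly
independent vectors `(-L)^{r_p} e_{k_p}` with `r_p = (d^p)_{k_p}`. -/
theorem stmt_4 {n m N : ℕ} (hm : m ≤ n) (G : SimpleGraph (Fin n)) [DecidableRel G.Adj]
    (hconn : G.Connected)
    (d : Fin N → Fin m → ℕ) (k : Fin N → Fin m)
    (hd : ∀ p, ∃ v : Fin n, d p = fun j => G.dist v (Fin.castLE hm j))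
    (hrule : ∀ p q : Fin N, p < q → d p (k p) < d q (k p)) :
    LinearIndependent ℝ (fun p : Fin N =>
      (-(G.lapMatrix ℝ)) ^ (d p (k p)) *ᵥ Pi.single (Fin.castLE hm (k p)) (1 : ℝ)) := by
  choose v hv using hd
  have hdist : ∀ p j, d p j = G.dist (v p) (Fin.castLE hm j) := by
    intro p j; rw [hv p]
  rw [Fintype.linearIndependent_iff]
  intro g hg
  by_contra hc
  push_neg at hc
  obtain ⟨p0, hp0⟩ := hc
  -- take the maximal index with g ≠ 0
  have hS : (Finset.univ.filter (fun p => g p ≠ 0)).Nonempty :=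
    ⟨p0, by simp [hp0]⟩
  set q := (Finset.univ.filter (fun p => g p ≠ 0)).max' hS with hqdef
  have hqmem : g q ≠ 0 := by
    have := (Finset.univ.filter (fun p => g p ≠ 0)).max'_mem hS
    simpa using this
  have hqmax : ∀ p : Fin N, g p ≠ 0 → p ≤ q := by
    intro p hp
    exact Finset.le_max' _ p (by simp [hp])
  -- evaluate the sum at vertex v q
  have heval : ∑ p : Fin N, g p * ((-(G.lapMatrix ℝ)) ^ (d p (k p))) (v q) (Fin.castLE hm (k p)) = 0 := by
    have := congrFun hg (v q)
    simpa [Matrix.mulVec_single, Finset.sum_apply, Pi.smul_apply, smul_eq_mul] using this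
  have hsingle : ∀ p : Fin N, p ≠ q →
      g p * ((-(G.lapMatrix ℝ)) ^ (d p (k p))) (v q) (Fin.castLE hm (k p)) = 0 := by
    intro p hp
    rcases lt_or_ge p q with hlt | hge
    · -- p < q : matrix entry is zero since dist (v q) (k p) = d q (k p) > d p (k p)
      have hgt : d p (k p) < G.dist (v q) (Fin.castLE hm (k p)) := by
        rw [← hdist q (k p)]
        exact hrule p q hlt
      rw [(negLap_pow_key G hconn (d p (k p)) (v q) (Fin.castLE hm (k p))).1 hgt, mul_zero]
    · -- q < p : g p = 0
      have hpq : q < p := lt_of_le_of_ne hge (Ne.symm hp)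
      have : g p = 0 := by
        by_contra hgp
        exact absurd (hqmax p hgp) (not_le.2 hpq)
      rw [this, zero_mul]
  have hqterm : g q * ((-(G.lapMatrix ℝ)) ^ (d q (k q))) (v q) (Fin.castLE hm (k q)) = 0 := by
    rw [← heval, Finset.sum_eq_single q (fun p _ hp => hsingle p hp) (by simp)]
  have hpos : 0 < ((-(G.lapMatrix ℝ)) ^ (d q (k q))) (v q) (Fin.castLE hm (k q)) :=
    (negLap_pow_key G hconn (d q (k q)) (v q) (Fin.castLE hm (k q))).2 (hdist q (k q)).symm
  exact hqmem (by
    rcases mul_eq_zero.1 hqterm with h | h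
    · exact h
    · exact absurd h (ne_of_gt hpos))
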